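/- Suppose the mean mRNA number M̄ : [0,τ_D] → ℝ satisfies, for every s ∈ [0,τ_D], M̄(s) = M̄(0)·e^{−σ₁ s} + ∫₀^s λ₁·V₀·2^{x/τ_D}·e^{−σ₁(s−x)} dx, together with the equilibrium (division) condition M̄(0) = M̄(τ_D)/2. Then for every s ∈ [0,τ_D], M̄(s)/V(s) = λ₁ τ_D/(σ₁ τ_D + log 2); equivalently M̄(s) = (λ₁ τ_D/(σ₁ τ_D + log 2))·V₀·2^{s/τ_D}. -/

import Mathlib

open Real MeasureTheory intervalIntegral

lemma int_exp_aux (a s : ℝ) (ha : a ≠ 0) :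
    ∫ x in (0 : ℝ)..s, Real.exp (a * x) = (Real.exp (a * s) - 1) / a := by
  have hderiv : ∀ x ∈ Set.uIcc (0:ℝ) s,
      HasDerivAt (fun y => Real.exp (a * y) / a) (Real.exp (a * x)) x := by
    intro x _
    have h1 : HasDerivAt (fun y => a * y) a x := by
      simpa using (hasDerivAt_id x).const_mul a
    have h2 := (h1.exp).div_const a
    simpa [mul_comm, mul_div_assoc, mul_div_cancel_left₀ _ ha] using h2
  rw [intervalIntegral.integral_eq_sub_of_hasDerivAt hderiv
    (((Real.continuous_exp.comp (continuous_const.mul continuous_id)).intervalIntegrable 0 s))]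
  simp [sub_div]

/-- If the mean mRNA number `M` satisfies, for every `s ∈ [0, τ_D]`,
`M s = M 0 · e^{-σ₁ s} + ∫₀^s λ₁ V₀ 2^{x/τ_D} e^{-σ₁ (s - x)} dx`, together with the
equilibrium condition `M 0 = M τ_D / 2`, then for every `s ∈ [0, τ_D]` the concentration
`M s / (V₀ 2^{s/τ_D})` equals `λ₁ τ_D / (σ₁ τ_D + log 2)`; equivalently
`M s = (λ₁ τ_D / (σ₁ τ_D + log 2)) · V₀ · 2^{s/τ_D}`. -/
theorem mean_mRNA_concentration_constant
    (lam1 sig1 V0 tauD : ℝ)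
    (hlam1 : 0 ≤ lam1) (hsig1 : 0 < sig1) (hV0 : 0 < V0) (htauD : 0 < tauD)
    (M : ℝ → ℝ)
    (hM : ∀ s ∈ Set.Icc (0 : ℝ) tauD,
      M s = M 0 * Real.exp (-sig1 * s)
        + ∫ x in (0 : ℝ)..s, lam1 * V0 * (2 : ℝ) ^ (x / tauD) * Real.exp (-sig1 * (s - x)))
    (hdiv : M 0 = M tauD / 2) :
    ∀ s ∈ Set.Icc (0 : ℝ) tauD,
      M s / (V0 * (2 : ℝ) ^ (s / tauD)) = lam1 * tauD / (sig1 * tauD + Real.log 2) ∧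
      M s = lam1 * tauD / (sig1 * tauD + Real.log 2) * (V0 * (2 : ℝ) ^ (s / tauD)) := by
  set a : ℝ := sig1 + Real.log 2 / tauD with ha_def
  have hlog2 : (0:ℝ) < Real.log 2 := Real.log_pos (by norm_num)
  have ha : 0 < a := by positivity
  have hane : a ≠ 0 := ne_of_gt ha
  have htne : tauD ≠ 0 := ne_of_gt htauD
  set c0 : ℝ := lam1 * V0 / a with hc0_def
  -- closed form for M on [0, tauD]
  have hMform : ∀ s ∈ Set.Icc (0 : ℝ) tauD,
      M s = M 0 * Real.exp (-sig1 * s)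
        + c0 * ((2:ℝ) ^ (s / tauD) - Real.exp (-sig1 * s)) := by
    intro s hs
    rw [hM s hs]
    congr 1
    have hintegrand : ∀ x : ℝ,
        lam1 * V0 * (2 : ℝ) ^ (x / tauD) * Real.exp (-sig1 * (s - x))
          = (lam1 * V0 * Real.exp (-sig1 * s)) * Real.exp (a * x) := by
      intro x
      have harg : Real.log 2 * (x / tauD) + -sig1 * (s - x) = -sig1 * s + a * x := by
        rw [ha_def]; field_simp; ring
      rw [Real.rpow_def_of_pos (by norm_num : (0:ℝ) < 2), mul_assoc, ← Real.exp_add,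
        harg, Real.exp_add, ← mul_assoc]
    simp only [hintegrand]
    rw [intervalIntegral.integral_const_mul, int_exp_aux a s hane]
    have hexp : Real.exp (-sig1 * s) * Real.exp (a * s) = (2:ℝ) ^ (s / tauD) := by
      rw [← Real.exp_add, Real.rpow_def_of_pos (by norm_num : (0:ℝ) < 2)]
      congr 1
      field_simp [ha_def]
      rw [ha_def]
      have e : Real.log 2 / tauD * tauD = Real.log 2 := div_mul_cancel₀ _ htne
      linear_combination s * e
    rw [← hexp, hc0_def]
    field_simp
  -- evaluate at tauD
  have h2 : ((2:ℝ) : ℝ) ^ (tauD / tauD) = 2 := by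
    rw [div_self htne, Real.rpow_one]
  have hend := hMform tauD ⟨le_of_lt htauD, le_refl _⟩
  rw [h2] at hend
  set E : ℝ := Real.exp (-sig1 * tauD) with hE_def
  have hElt : E < 1 := by
    rw [hE_def]
    apply Real.exp_lt_one_iff.mpr
    nlinarith
  have hM0 : M 0 = c0 := by
    have h2E : (2 : ℝ) - E ≠ 0 := by nlinarith
    have : M 0 * (2 - E) = c0 * (2 - E) := by
      have := hdiv
      nlinarith [hend, hdiv]
    exact mul_right_cancel₀ h2E this
  -- conclude
  intro s hs
  have hMs : M s = c0 * (2:ℝ) ^ (s / tauD) := by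
    rw [hMform s hs, hM0]; ring
  have hc0V : c0 = lam1 * tauD / (sig1 * tauD + Real.log 2) * V0 := by
    rw [hc0_def, ha_def]
    have hd : sig1 * tauD + Real.log 2 ≠ 0 := by positivity
    field_simp
  have hpow : (0:ℝ) < (2:ℝ) ^ (s / tauD) := Real.rpow_pos_of_pos (by norm_num) _
  constructor
  · rw [hMs, hc0V]
    field_simp
  · rw [hMs, hc0V]; ring
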